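/- arXiv:1309.6899 — 3 statements merged into one kernel-verified Lean document; each statement's English description precedes it below -/
import Mathlib

section
/- Let s : Λ → ℝ, Λ := [-1,1]², be any function of the form s(x,y) = c₀(y) + c₁(y)·x + c₂(y)·x², where each coefficient function c_k : [-1,1] → ℝ is continuously differentiable and restricts to a polynomial of degree at most 2 on [-1,0] and on [0,1]. Then ‖∂_x² s‖_{L²(Λ)} ≤ √3 · ‖∂_x s‖_{L²(Λ)}, where ∂_x² s is taken piecewise on the interiors of [-1,1]×[-1,0] and [-1,1]×[0,1]. -/
open MeasureTheory
open scoped ENNReal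

/-- Partial derivative in the first (`x`) coordinate. -/
noncomputable def pdx (f : ℝ × ℝ → ℝ) : ℝ × ℝ → ℝ := fun q => deriv (fun t => f (t, q.2)) q.1

/-- Partial derivative in the second (`y`) coordinate. -/
noncomputable def pdy (f : ℝ × ℝ → ℝ) : ℝ × ℝ → ℝ := fun q => deriv (fun t => f (q.1, t)) q.2

/-- `Dm (α₁, α₂) f = ∂_x^{α₁} ∂_y^{α₂} f`. -/
noncomputable def Dm (a : ℕ × ℕ) (f : ℝ × ℝ → ℝ) : ℝ × ℝ → ℝ := pdx^[a.1] (pdy^[a.2] f)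

/-- The `L^p` norm over a set `R ⊆ ℝ²` (with respect to Lebesgue measure). -/
noncomputable def LpN (p : ℝ≥0∞) (R : Set (ℝ × ℝ)) (f : ℝ × ℝ → ℝ) : ℝ≥0∞ :=
  eLpNorm f p (volume.restrict R)

/-- The reference square `Λ := [-1,1]²`. -/
def Lam : Set (ℝ × ℝ) := Set.Icc (-1, -1) (1, 1)

private lemma nnnorm_rpow_two_eq (r : ℝ) : (‖r‖₊ : ℝ≥0∞) ^ (2:ℝ) = ENNReal.ofReal (r^2) := by
  rw [← enorm_eq_nnnorm, ← ofReal_norm, Real.norm_eq_abs,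
      ENNReal.ofReal_rpow_of_nonneg (abs_nonneg r) (by norm_num)]
  rw [show ((2:ℝ)) = ((2:ℕ):ℝ) by norm_num, Real.rpow_natCast, sq_abs]

private lemma interval_calc (a b : ℝ) :
    ∫ x in (-1:ℝ)..1, (a + 2*b*x)^2 = 2*a^2 + 8/3*b^2 := by
  have h : ∀ x : ℝ, (a + 2*b*x)^2 = a^2 + (4*a*b)*x + (4*b^2)*x^2 := fun x => by ring
  simp_rw [h]
  rw [intervalIntegral.integral_add
        (((by fun_prop : Continuous fun x:ℝ => a^2 + (4*a*b)*x)).intervalIntegrable _ _)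
        (((by fun_prop : Continuous fun x:ℝ => (4*b^2)*x^2)).intervalIntegrable _ _),
      intervalIntegral.integral_add
        ((continuous_const).intervalIntegrable _ _)
        (((by fun_prop : Continuous fun x:ℝ => (4*a*b)*x)).intervalIntegrable _ _),
      intervalIntegral.integral_const_mul, intervalIntegral.integral_const_mul]
  simp [integral_pow, integral_id]
  ring


/-- inverse inequality `‖∂_x² s‖_{L²(Λ)} ≤ √3 ‖∂_x s‖_{L²(Λ)}` for functions
`s(x,y) = c₀(y) + c₁(y)x + c₂(y)x²` whose coefficient functions are `C¹` quadratic
splines on `[-1,1]` with knot `0`. -/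
theorem spline_inverse_estimate (c : Fin 3 → ℝ → ℝ)
    (hc1 : ∀ k, ContDiffOn ℝ 1 (c k) (Set.Icc (-1 : ℝ) 1))
    (hpoly : ∀ k,
      (∃ p : Polynomial ℝ, p.degree ≤ 2 ∧
        Set.EqOn (c k) (fun y => p.eval y) (Set.Icc (-1 : ℝ) 0)) ∧
      (∃ q : Polynomial ℝ, q.degree ≤ 2 ∧
        Set.EqOn (c k) (fun y => q.eval y) (Set.Icc (0 : ℝ) 1)))
    (s : ℝ × ℝ → ℝ) (hs : s = fun z => c 0 z.2 + c 1 z.2 * z.1 + c 2 z.2 * z.1 ^ 2) :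
    LpN 2 Lam (Dm (2, 0) s) ≤ ENNReal.ofReal (Real.sqrt 3) * LpN 2 Lam (Dm (1, 0) s) := by
  -- the two piecewise derivatives
  have hpdx1 : pdx s = fun q : ℝ × ℝ => c 1 q.2 + 2 * c 2 q.2 * q.1 := by
    funext q
    show deriv (fun t => s (t, q.2)) q.1 = _
    rw [hs]
    have h : HasDerivAt (fun t : ℝ => c 0 q.2 + c 1 q.2 * t + c 2 q.2 * t ^ 2)
        (c 1 q.2 + 2 * c 2 q.2 * q.1) q.1 := by
      have h := (((hasDerivAt_id q.1).const_mul (c 1 q.2)).const_add (c 0 q.2)).add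
        ((hasDerivAt_pow 2 q.1).const_mul (c 2 q.2))
      exact h.congr_deriv (by push_cast; ring)
    exact h.deriv
  have hD1 : Dm (1, 0) s = fun q : ℝ × ℝ => c 1 q.2 + 2 * c 2 q.2 * q.1 := by
    show pdx^[1] (pdy^[0] s) = _
    simpa using hpdx1
  have hD2 : Dm (2, 0) s = fun q : ℝ × ℝ => 2 * c 2 q.2 := by
    show pdx^[2] (pdy^[0] s) = _
    simp only [Function.iterate_succ, Function.iterate_zero, Function.comp_apply, id_eq,
      Function.comp, Function.iterate_one]
    have : pdx (pdx s) = fun q : ℝ × ℝ => 2 * c 2 q.2 := by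
      funext q
      show deriv (fun t => pdx s (t, q.2)) q.1 = _
      rw [hpdx1]
      have h : HasDerivAt (fun t : ℝ => c 1 q.2 + 2 * c 2 q.2 * t) (2 * c 2 q.2) q.1 := by
        simpa using ((hasDerivAt_id q.1).const_mul (2 * c 2 q.2)).const_add (c 1 q.2)
      exact h.deriv
    convert this
  set I : Set ℝ := Set.Icc (-1:ℝ) 1 with hIdef
  have hLam : Lam = I ×ˢ I := by
    rw [Lam, Set.Icc_prod_eq]
  have hLamMeas : MeasurableSet Lam := measurableSet_Icc
  have hμ : (volume : Measure (ℝ×ℝ)).restrict Lam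
      = (volume.restrict I).prod (volume.restrict I) := by
    rw [hLam, Measure.prod_restrict, ← Measure.volume_eq_prod]
  -- L² norms as lintegrals
  have key : ∀ f : ℝ×ℝ → ℝ,
      LpN 2 Lam f = (∫⁻ q in Lam, ENNReal.ofReal ((f q)^2)) ^ (1/2 : ℝ) := by
    intro f
    rw [LpN, eLpNorm_eq_lintegral_rpow_enorm_toReal two_ne_zero ENNReal.ofNat_ne_top,
      show ((2:ℝ≥0∞).toReal) = (2:ℝ) by norm_num]
    congr 1
    exact lintegral_congr fun q => nnnorm_rpow_two_eq _
  -- continuity / measurability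
  have hmap : Set.MapsTo (Prod.snd : ℝ×ℝ → ℝ) Lam I := fun q hq => ⟨hq.1.2, hq.2.2⟩
  have hc2cont : ContinuousOn (fun q : ℝ×ℝ => c 2 q.2) Lam :=
    ((hc1 2).continuousOn).comp continuous_snd.continuousOn hmap
  have hc1cont : ContinuousOn (fun q : ℝ×ℝ => c 1 q.2) Lam :=
    ((hc1 1).continuousOn).comp continuous_snd.continuousOn hmap
  have hf1cont : ContinuousOn (fun q : ℝ×ℝ => c 1 q.2 + 2 * c 2 q.2 * q.1) Lam :=
    hc1cont.add ((continuousOn_const.mul hc2cont).mul continuous_fst.continuousOn)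
  have hf2cont : ContinuousOn (fun q : ℝ×ℝ => 2 * c 2 q.2) Lam :=
    continuousOn_const.mul hc2cont
  have hae1 : AEMeasurable (fun q : ℝ×ℝ => ENNReal.ofReal ((c 1 q.2 + 2 * c 2 q.2 * q.1)^2))
      ((volume.restrict I).prod (volume.restrict I)) := by
    rw [← hμ]
    exact ENNReal.measurable_ofReal.comp_aemeasurable
      ((hf1cont.pow 2).aemeasurable hLamMeas)
  have hae2 : AEMeasurable (fun q : ℝ×ℝ => ENNReal.ofReal (((2 * c 2 q.2 : ℝ))^2))
      ((volume.restrict I).prod (volume.restrict I)) := by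
    rw [← hμ]
    exact ENNReal.measurable_ofReal.comp_aemeasurable
      ((hf2cont.pow 2).aemeasurable hLamMeas)
  -- main lintegral inequality
  have hAB : (∫⁻ q in Lam, ENNReal.ofReal (((2 * c 2 q.2 : ℝ))^2))
      ≤ 3 * ∫⁻ q in Lam, ENNReal.ofReal ((c 1 q.2 + 2 * c 2 q.2 * q.1)^2) := by
    rw [hμ, lintegral_prod_symm _ hae2, lintegral_prod_symm _ hae1]
    rw [← lintegral_const_mul' 3 _ (by norm_num)]
    apply lintegral_mono
    intro y
    simp only
    -- fiberwise inequality at y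
    set a := c 1 y
    set b := c 2 y
    have hL : (∫⁻ x in I, ENNReal.ofReal ((2*b)^2)) = ENNReal.ofReal (8 * b^2) := by
      rw [setLIntegral_const, hIdef, Real.volume_Icc]
      rw [← ENNReal.ofReal_mul (by positivity)]
      norm_num
      ring_nf
      rw [ENNReal.ofReal_mul (by positivity)]; norm_num
    have hR : (∫⁻ x in I, ENNReal.ofReal ((a + 2*b*x)^2))
        = ENNReal.ofReal (2*a^2 + 8/3*b^2) := by
      have hcont : Continuous fun x : ℝ => (a + 2*b*x)^2 := by fun_prop
      have hint : IntegrableOn (fun x : ℝ => (a + 2*b*x)^2) I := hcont.integrableOn_Icc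
      rw [← ofReal_integral_eq_lintegral_ofReal hint
        (Filter.Eventually.of_forall fun x => by positivity)]
      congr 1
      rw [hIdef, MeasureTheory.integral_Icc_eq_integral_Ioc,
        ← intervalIntegral.integral_of_le (by norm_num : (-1:ℝ) ≤ 1)]
      exact interval_calc a b
    rw [hL, hR]
    rw [show (3:ℝ≥0∞) = ENNReal.ofReal 3 by norm_num,
      ← ENNReal.ofReal_mul (by norm_num)]
    apply ENNReal.ofReal_le_ofReal
    nlinarith [sq_nonneg a, sq_nonneg b]
  -- conclude
  rw [key, key, hD1, hD2]
  calc (∫⁻ q in Lam, ENNReal.ofReal (((2 * c 2 q.2 : ℝ))^2)) ^ (1/2:ℝ)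
      ≤ (3 * ∫⁻ q in Lam, ENNReal.ofReal ((c 1 q.2 + 2 * c 2 q.2 * q.1)^2)) ^ (1/2:ℝ) :=
        ENNReal.rpow_le_rpow hAB (by norm_num)
    _ = (3:ℝ≥0∞) ^ (1/2:ℝ) *
          (∫⁻ q in Lam, ENNReal.ofReal ((c 1 q.2 + 2 * c 2 q.2 * q.1)^2)) ^ (1/2:ℝ) :=
        ENNReal.mul_rpow_of_nonneg _ _ (by norm_num)
    _ = ENNReal.ofReal (Real.sqrt 3) *
          (∫⁻ q in Lam, ENNReal.ofReal ((c 1 q.2 + 2 * c 2 q.2 * q.1)^2)) ^ (1/2:ℝ) := by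
        congr 1
        rw [show (3:ℝ≥0∞) = ENNReal.ofReal 3 by norm_num,
          ENNReal.ofReal_rpow_of_pos (by norm_num : (0:ℝ) < 3), Real.sqrt_eq_rpow]
end

section
/- There exists a constant C > 0 with the following property. Let M := [x₀-h_x, x₀+h_x] × [y₀-h_y, y₀+h_y] with x₀, y₀ ∈ ℝ and h_x, h_y > 0, and let u : ℝ² → ℝ be of class C¹ on an open neighbourhood of M. Then sup_{(x,y) ∈ M} |Π^yu(x,y)| ≤ C · ( sup_{(x,y) ∈ M} |u(x,y)| + h_y · sup_{(x,y) ∈ M} |∂_y u(x,y)| ). -/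
open MeasureTheory
open scoped ENNReal

/-- The spline basis function `φ̂₋₁` on `[-1,1]`. -/
noncomputable def phiN (x : ℝ) : ℝ := if x ≤ 0 then (x - 1)^2 / 2 - x^2 else (x - 1)^2 / 2

/-- The spline basis function `φ̂₁` on `[-1,1]`. -/
noncomputable def phiP (x : ℝ) : ℝ := if x ≤ 0 then (x + 1)^2 / 2 else (x + 1)^2 / 2 - x^2

/-- The spline basis function `ψ̂₋₁` on `[-1,1]`. -/
noncomputable def psiN (x : ℝ) : ℝ := if x ≤ 0 then (x - 1)^2 / 4 - x^2 else (x - 1)^2 / 4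

/-- The spline basis function `ψ̂₁` on `[-1,1]`. -/
noncomputable def psiP (x : ℝ) : ℝ := if x ≤ 0 then -(x + 1)^2 / 4 else -(x + 1)^2 / 4 + x^2

/-- The quadratic Lagrange basis function `ℓ̂₋₁` on `[-1,1]`. -/
noncomputable def lagN (x : ℝ) : ℝ := x * (x - 1) / 2

/-- The quadratic Lagrange basis function `ℓ̂₀` on `[-1,1]`. -/
noncomputable def lagO (x : ℝ) : ℝ := -((x + 1) * (x - 1))

/-- The quadratic Lagrange basis function `ℓ̂₁` on `[-1,1]`. -/
noncomputable def lagP (x : ℝ) : ℝ := (x + 1) * x / 2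

/-- The anisotropic macro-element interpolation operator `Π̂ʸ` on `Λ = [-1,1]²`:
`P₂` Lagrange interpolation in `x` tensorized with `C¹-P₂` macro interpolation in `y`. -/
noncomputable def PiY (u : ℝ × ℝ → ℝ) : ℝ × ℝ → ℝ := fun z =>
    u (-1, -1) * lagN z.1 * phiN z.2 + u (0, -1) * lagO z.1 * phiN z.2
  + u (1, -1) * lagP z.1 * phiN z.2
  + u (-1, 1) * lagN z.1 * phiP z.2 + u (0, 1) * lagO z.1 * phiP z.2
  + u (1, 1) * lagP z.1 * phiP z.2
  + pdy u (-1, -1) * lagN z.1 * psiN z.2 + pdy u (0, -1) * lagO z.1 * psiN z.2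
  + pdy u (1, -1) * lagP z.1 * psiN z.2
  + pdy u (-1, 1) * lagN z.1 * psiP z.2 + pdy u (0, 1) * lagO z.1 * psiP z.2
  + pdy u (1, 1) * lagP z.1 * psiP z.2

/-- The anisotropic macro-element interpolation operator `Πʸ` on the macro-element
`M = [x₀-h_x, x₀+h_x] × [y₀-h_y, y₀+h_y]`, obtained from `Π̂ʸ` by the affine reference
mapping `F_M`. -/
noncomputable def PiYW (x₀ y₀ hx hy : ℝ) (u : ℝ × ℝ → ℝ) : ℝ × ℝ → ℝ := fun z =>
  PiY (fun w => u (x₀ + hx * w.1, y₀ + hy * w.2)) ((z.1 - x₀) / hx, (z.2 - y₀) / hy)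

lemma pdy_eq_fderiv {u : ℝ × ℝ → ℝ} {q : ℝ × ℝ} (hd : DifferentiableAt ℝ u q) :
    pdy u q = fderiv ℝ u q (0, 1) := by
  have h2 : HasDerivAt (fun t : ℝ => (q.1, t)) ((0 : ℝ), (1 : ℝ)) q.2 :=
    (hasDerivAt_const q.2 q.1).prodMk (hasDerivAt_id q.2)
  have h1 : HasDerivAt (fun t => u (q.1, t)) (fderiv ℝ u q (0, 1)) q.2 := by
    exact hd.hasFDerivAt.comp_hasDerivAt q.2 h2
  exact h1.deriv

lemma pdy_contOn {u : ℝ × ℝ → ℝ} {U : Set (ℝ × ℝ)} (hU : IsOpen U)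
    (hu : ContDiffOn ℝ 1 u U) : ContinuousOn (pdy u) U := by
  have hf : ContinuousOn (fderiv ℝ u) U := hu.continuousOn_fderiv_of_isOpen hU le_rfl
  have hc : ContinuousOn (fun q => (fderiv ℝ u q) ((0:ℝ), (1:ℝ))) U :=
    hf.clm_apply continuousOn_const
  refine hc.congr fun q hq => ?_
  exact pdy_eq_fderiv ((hu.contDiffAt (hU.mem_nhds hq)).differentiableAt one_ne_zero)

lemma pdy_scaled {u : ℝ × ℝ → ℝ} {U : Set (ℝ × ℝ)} (hU : IsOpen U)
    (hu : ContDiffOn ℝ 1 u U) (x₀ y₀ hx hy i j : ℝ)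
    (hmem : (x₀ + hx * i, y₀ + hy * j) ∈ U) :
    pdy (fun w => u (x₀ + hx * w.1, y₀ + hy * w.2)) (i, j)
      = hy * pdy u (x₀ + hx * i, y₀ + hy * j) := by
  set p : ℝ × ℝ := (x₀ + hx * i, y₀ + hy * j) with hp
  have hd : DifferentiableAt ℝ u p := (hu.contDiffAt (hU.mem_nhds hmem)).differentiableAt one_ne_zero
  have h2 : HasDerivAt (fun t : ℝ => (p.1, t)) ((0 : ℝ), (1 : ℝ)) p.2 :=
    (hasDerivAt_const p.2 p.1).prodMk (hasDerivAt_id p.2)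
  have h1 : HasDerivAt (fun t => u (p.1, t)) (fderiv ℝ u p (0, 1)) p.2 := by
    exact hd.hasFDerivAt.comp_hasDerivAt p.2 h2
  have h3 : HasDerivAt (fun t : ℝ => y₀ + hy * t) hy j := by
    simpa using ((hasDerivAt_id j).const_mul hy).const_add y₀
  have h4 : HasDerivAt (fun t : ℝ => u (p.1, y₀ + hy * t)) (fderiv ℝ u p (0, 1) * hy) j := by
    have := h1.comp j h3
    exact this
  have h5 : pdy (fun w => u (x₀ + hx * w.1, y₀ + hy * w.2)) (i, j)
      = fderiv ℝ u p (0, 1) * hy := by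
    have heq : (fun t : ℝ => u (x₀ + hx * i, y₀ + hy * t))
        = fun t : ℝ => u (p.1, y₀ + hy * t) := by rfl
    simp only [pdy]
    rw [heq]
    exact h4.deriv
  rw [h5, pdy_eq_fderiv hd, mul_comm]

lemma sup_mem_le {M : Set (ℝ × ℝ)} {f : ℝ × ℝ → ℝ} {B : ℝ} (hB : 0 ≤ B)
    (hb : ∀ z ∈ M, |f z| ≤ B) : (⨆ z ∈ M, |f z|) ≤ B :=
  Real.iSup_le (fun z => Real.iSup_le (fun hz => hb z hz) hB) hB

lemma le_sup_mem {M : Set (ℝ × ℝ)} {f : ℝ × ℝ → ℝ} {B : ℝ}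
    (hb : ∀ z ∈ M, |f z| ≤ B) {p : ℝ × ℝ} (hp : p ∈ M) :
    |f p| ≤ ⨆ z ∈ M, |f z| := by
  have hB : 0 ≤ B := le_trans (abs_nonneg _) (hb p hp)
  have hbdd : BddAbove (Set.range fun z => ⨆ _ : z ∈ M, |f z|) := by
    refine ⟨B, ?_⟩
    rintro x ⟨z, rfl⟩
    exact Real.iSup_le (fun hz => hb z hz) hB
  refine le_trans ?_ (le_ciSup hbdd p)
  exact le_ciSup (f := fun _ : p ∈ M => |f p|) ⟨|f p|, by rintro x ⟨z, rfl⟩; exact le_rfl⟩ hp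

lemma lag_bound {x : ℝ} (h : -1 ≤ x) (h' : x ≤ 1) :
    |lagN x| ≤ 2 ∧ |lagO x| ≤ 2 ∧ |lagP x| ≤ 2 := by
  unfold lagN lagO lagP
  refine ⟨?_, ?_, ?_⟩ <;> rw [abs_le] <;> constructor <;> nlinarith

lemma phi_bound {x : ℝ} (h : -1 ≤ x) (h' : x ≤ 1) :
    |phiN x| ≤ 2 ∧ |phiP x| ≤ 2 ∧ |psiN x| ≤ 2 ∧ |psiP x| ≤ 2 := by
  unfold phiN phiP psiN psiP
  refine ⟨?_, ?_, ?_, ?_⟩ <;> split_ifs <;> rw [abs_le] <;> constructor <;> nlinarith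

lemma prod_key (c l p B : ℝ) (hc : |c| ≤ B) (hl : |l| ≤ 2) (hp : |p| ≤ 2) :
    |c * l * p| ≤ 4 * B := by
  rw [abs_mul, abs_mul]
  have h1 : |l| * |p| ≤ 4 := by nlinarith [abs_nonneg l, abs_nonneg p]
  calc |c| * |l| * |p| = |c| * (|l| * |p|) := by ring
    _ ≤ B * 4 := mul_le_mul hc h1 (by positivity) (le_trans (abs_nonneg c) hc)
    _ = 4 * B := by ring

/-- `L∞`-stability of `Πʸ` on the macro-element
`M = [x₀-h_x, x₀+h_x] × [y₀-h_y, y₀+h_y]`: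
`sup_M |Πʸu| ≤ C (sup_M |u| + h_y sup_M |∂_y u|)`. -/
theorem piy_world_linfty_stability :
    ∃ C : ℝ, 0 < C ∧
      ∀ (x₀ y₀ hx hy : ℝ), 0 < hx → 0 < hy →
      ∀ (u : ℝ × ℝ → ℝ) (U : Set (ℝ × ℝ)), IsOpen U →
        Set.Icc (x₀ - hx, y₀ - hy) (x₀ + hx, y₀ + hy) ⊆ U →
        ContDiffOn ℝ 1 u U →
        (⨆ z ∈ Set.Icc (x₀ - hx, y₀ - hy) (x₀ + hx, y₀ + hy), |PiYW x₀ y₀ hx hy u z|) ≤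
          C * ((⨆ z ∈ Set.Icc (x₀ - hx, y₀ - hy) (x₀ + hx, y₀ + hy), |u z|) +
            hy * ⨆ z ∈ Set.Icc (x₀ - hx, y₀ - hy) (x₀ + hx, y₀ + hy), |pdy u z|) := by
  refine ⟨24, by norm_num, ?_⟩
  intro x₀ y₀ hx hy hhx hhy u U hU hMU hu
  set M := Set.Icc ((x₀ - hx, y₀ - hy) : ℝ × ℝ) (x₀ + hx, y₀ + hy) with hM
  obtain ⟨Bu, hBu⟩ := (isCompact_Icc (a := ((x₀ - hx, y₀ - hy) : ℝ × ℝ))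
    (b := (x₀ + hx, y₀ + hy))).exists_bound_of_continuousOn (hu.continuousOn.mono hMU)
  obtain ⟨Bd, hBd⟩ := (isCompact_Icc (a := ((x₀ - hx, y₀ - hy) : ℝ × ℝ))
    (b := (x₀ + hx, y₀ + hy))).exists_bound_of_continuousOn ((pdy_contOn hU hu).mono hMU)
  simp only [Real.norm_eq_abs] at hBu hBd
  have hc : ((x₀, y₀) : ℝ × ℝ) ∈ M := by
    simp only [hM, Set.mem_Icc, Prod.le_def]
    refine ⟨⟨?_, ?_⟩, ?_, ?_⟩ <;> linarith
  set S := ⨆ z ∈ M, |u z| with hS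
  set T := ⨆ z ∈ M, |pdy u z| with hT
  have hS0 : 0 ≤ S := le_trans (abs_nonneg _) (le_sup_mem hBu hc)
  have hT0 : 0 ≤ T := le_trans (abs_nonneg _) (le_sup_mem hBd hc)
  have hRHS0 : (0:ℝ) ≤ 24 * (S + hy * T) := by positivity
  refine sup_mem_le hRHS0 ?_
  intro z hz
  have mem : ∀ i j : ℝ, -1 ≤ i → i ≤ 1 → -1 ≤ j → j ≤ 1 →
      ((x₀ + hx * i, y₀ + hy * j) : ℝ × ℝ) ∈ M := by
    intro i j h1 h2 h3 h4
    simp only [hM, Set.mem_Icc, Prod.le_def]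
    refine ⟨⟨?_, ?_⟩, ?_, ?_⟩ <;> nlinarith
  have hcu : ∀ i j : ℝ, -1 ≤ i → i ≤ 1 → -1 ≤ j → j ≤ 1 →
      |u (x₀ + hx * i, y₀ + hy * j)| ≤ S :=
    fun i j h1 h2 h3 h4 => le_sup_mem hBu (mem i j h1 h2 h3 h4)
  have hcd : ∀ i j : ℝ, -1 ≤ i → i ≤ 1 → -1 ≤ j → j ≤ 1 →
      |hy * pdy u (x₀ + hx * i, y₀ + hy * j)| ≤ hy * T := by
    intro i j h1 h2 h3 h4
    rw [abs_mul, abs_of_pos hhy]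
    exact mul_le_mul_of_nonneg_left (le_sup_mem hBd (mem i j h1 h2 h3 h4)) hhy.le
  simp only [hM, Set.mem_Icc, Prod.le_def] at hz
  obtain ⟨⟨hz1, hz2⟩, hz3, hz4⟩ := hz
  have ha1 : -1 ≤ (z.1 - x₀) / hx := by rw [le_div_iff₀ hhx]; linarith
  have ha2 : (z.1 - x₀) / hx ≤ 1 := by rw [div_le_one hhx]; linarith
  have hb1 : -1 ≤ (z.2 - y₀) / hy := by rw [le_div_iff₀ hhy]; linarith
  have hb2 : (z.2 - y₀) / hy ≤ 1 := by rw [div_le_one hhy]; linarith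
  obtain ⟨L1, L2, L3⟩ := lag_bound ha1 ha2
  obtain ⟨P1, P2, P3, P4⟩ := phi_bound hb1 hb2
  have e1 := pdy_scaled hU hu x₀ y₀ hx hy (-1) (-1)
    (hMU (mem (-1) (-1) (by norm_num) (by norm_num) (by norm_num) (by norm_num)))
  have e2 := pdy_scaled hU hu x₀ y₀ hx hy 0 (-1)
    (hMU (mem 0 (-1) (by norm_num) (by norm_num) (by norm_num) (by norm_num)))
  have e3 := pdy_scaled hU hu x₀ y₀ hx hy 1 (-1)
    (hMU (mem 1 (-1) (by norm_num) (by norm_num) (by norm_num) (by norm_num)))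
  have e4 := pdy_scaled hU hu x₀ y₀ hx hy (-1) 1
    (hMU (mem (-1) 1 (by norm_num) (by norm_num) (by norm_num) (by norm_num)))
  have e5 := pdy_scaled hU hu x₀ y₀ hx hy 0 1
    (hMU (mem 0 1 (by norm_num) (by norm_num) (by norm_num) (by norm_num)))
  have e6 := pdy_scaled hU hu x₀ y₀ hx hy 1 1
    (hMU (mem 1 1 (by norm_num) (by norm_num) (by norm_num) (by norm_num)))
  simp only [PiYW, PiY]
  rw [e1, e2, e3, e4, e5, e6]
  obtain ⟨t1a, t1b⟩ := abs_le.mp (prod_key _ _ _ _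
    (hcu (-1) (-1) (by norm_num) (by norm_num) (by norm_num) (by norm_num)) L1 P1)
  obtain ⟨t2a, t2b⟩ := abs_le.mp (prod_key _ _ _ _
    (hcu 0 (-1) (by norm_num) (by norm_num) (by norm_num) (by norm_num)) L2 P1)
  obtain ⟨t3a, t3b⟩ := abs_le.mp (prod_key _ _ _ _
    (hcu 1 (-1) (by norm_num) (by norm_num) (by norm_num) (by norm_num)) L3 P1)
  obtain ⟨t4a, t4b⟩ := abs_le.mp (prod_key _ _ _ _
    (hcu (-1) 1 (by norm_num) (by norm_num) (by norm_num) (by norm_num)) L1 P2)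
  obtain ⟨t5a, t5b⟩ := abs_le.mp (prod_key _ _ _ _
    (hcu 0 1 (by norm_num) (by norm_num) (by norm_num) (by norm_num)) L2 P2)
  obtain ⟨t6a, t6b⟩ := abs_le.mp (prod_key _ _ _ _
    (hcu 1 1 (by norm_num) (by norm_num) (by norm_num) (by norm_num)) L3 P2)
  obtain ⟨s1a, s1b⟩ := abs_le.mp (prod_key _ _ _ _
    (hcd (-1) (-1) (by norm_num) (by norm_num) (by norm_num) (by norm_num)) L1 P3)
  obtain ⟨s2a, s2b⟩ := abs_le.mp (prod_key _ _ _ _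
    (hcd 0 (-1) (by norm_num) (by norm_num) (by norm_num) (by norm_num)) L2 P3)
  obtain ⟨s3a, s3b⟩ := abs_le.mp (prod_key _ _ _ _
    (hcd 1 (-1) (by norm_num) (by norm_num) (by norm_num) (by norm_num)) L3 P3)
  obtain ⟨s4a, s4b⟩ := abs_le.mp (prod_key _ _ _ _
    (hcd (-1) 1 (by norm_num) (by norm_num) (by norm_num) (by norm_num)) L1 P4)
  obtain ⟨s5a, s5b⟩ := abs_le.mp (prod_key _ _ _ _
    (hcd 0 1 (by norm_num) (by norm_num) (by norm_num) (by norm_num)) L2 P4)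
  obtain ⟨s6a, s6b⟩ := abs_le.mp (prod_key _ _ _ _
    (hcd 1 1 (by norm_num) (by norm_num) (by norm_num) (by norm_num)) L3 P4)
  rw [abs_le]
  constructor <;> linarith
end

section
/- Let p ∈ [1,∞), let T := [a₁,b₁] × [a₂,b₂] be an axis-aligned rectangle with h_x := b₁ - a₁ > 0, and let v be of class C¹ on an open neighbourhood of T. Then ∫_{a₂}^{b₂} ( |v(a₁,y)|^p + |v(b₁,y)|^p ) dy ≤ p · ‖v‖_{Lp(T)}^{p-1} · ‖∂_x v‖_{Lp(T)} + (2/h_x) · ‖v‖_{Lp(T)}^p. -/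
open MeasureTheory
open scoped ENNReal

open Filter
open scoped Topology

lemma contRpow {q : ℝ} (hq : 0 ≤ q) : Continuous fun x : ℝ => x ^ q :=
  continuous_iff_continuousAt.2 fun x => Real.continuousAt_rpow_const x q (Or.inr hq)

lemma eps_bound {p s e : ℝ} (hp : 1 ≤ p) (hs : 0 ≤ s) (he : 0 < e) :
    (s ^ 2 + e ^ 2) ^ (p / 2 - 1) * s ≤ (s + e) ^ (p - 1) := by
  rcases eq_or_lt_of_le hs with h0 | h0
  · rw [← h0, mul_zero]
    exact Real.rpow_nonneg (by linarith) _
  · have hse : (0:ℝ) < s + e := by linarith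
    rcases le_total p 2 with h2 | h2
    · have h1 : (s ^ 2 + e ^ 2) ^ (p / 2 - 1) ≤ (s ^ 2) ^ (p / 2 - 1) :=
        Real.rpow_le_rpow_of_nonpos (by positivity) (by nlinarith) (by linarith)
      have h2' : ((s ^ 2 : ℝ)) ^ (p / 2 - 1) = s ^ (p - 2) := by
        rw [← Real.rpow_natCast s 2, ← Real.rpow_mul hs]
        congr 1; ring
      calc (s ^ 2 + e ^ 2) ^ (p / 2 - 1) * s ≤ (s ^ 2) ^ (p / 2 - 1) * s :=
            mul_le_mul_of_nonneg_right h1 hs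
        _ = s ^ (p - 2) * s ^ (1:ℝ) := by rw [h2', Real.rpow_one]
        _ = s ^ (p - 1) := by rw [← Real.rpow_add h0]; congr 1; ring
        _ ≤ (s + e) ^ (p - 1) := Real.rpow_le_rpow hs (by linarith) (by linarith)
    · have h1 : s ^ 2 + e ^ 2 ≤ (s + e) ^ 2 := by nlinarith
      have h3 : (((s + e) ^ 2 : ℝ)) ^ (p / 2 - 1) = (s + e) ^ (p - 2) := by
        rw [← Real.rpow_natCast (s + e) 2, ← Real.rpow_mul hse.le]
        congr 1; ring
      calc (s ^ 2 + e ^ 2) ^ (p / 2 - 1) * s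
          ≤ ((s + e) ^ 2) ^ (p / 2 - 1) * (s + e) := by
            apply mul_le_mul (Real.rpow_le_rpow (by positivity) h1 (by linarith))
              (by linarith) hs (Real.rpow_nonneg (by positivity) _)
        _ = (s + e) ^ (p - 2) * (s + e) ^ (1:ℝ) := by rw [h3, Real.rpow_one]
        _ = (s + e) ^ (p - 1) := by rw [← Real.rpow_add hse]; congr 1; ring

lemma sq_zero_rpow {p : ℝ} (A : ℝ) : (A ^ 2 + (0:ℝ) ^ 2) ^ (p / 2) = |A| ^ p := by
  rw [show (0:ℝ) ^ 2 = 0 by norm_num, add_zero, ← sq_abs, ← Real.rpow_natCast |A| 2,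
    ← Real.rpow_mul (abs_nonneg A)]
  congr 1
  push_cast
  ring

lemma ftc_abs_rpow {p : ℝ} (hp : 1 ≤ p) {f f' : ℝ → ℝ} {c d : ℝ} (hcd : c ≤ d)
    (hderiv : ∀ t ∈ Set.Icc c d, HasDerivAt f (f' t) t)
    (hf'c : ContinuousOn f' (Set.Icc c d)) :
    |(|f d| ^ p) - |f c| ^ p| ≤ ∫ t in c..d, p * |f t| ^ (p - 1) * |f' t| := by
  have hfc : ContinuousOn f (Set.Icc c d) :=
    fun t ht => (hderiv t ht).continuousAt.continuousWithinAt
  have hp0 : (0:ℝ) < p := by linarith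
  have hp1 : (0:ℝ) ≤ p - 1 := by linarith
  -- bound function continuity, for any shift e
  have hbc : ∀ e : ℝ, ContinuousOn (fun t => p * (|f t| + e) ^ (p - 1) * |f' t|)
      (Set.Icc c d) := by
    intro e
    exact (continuousOn_const.mul ((contRpow hp1).comp_continuousOn
      (hfc.abs.add continuousOn_const))).mul hf'c.abs
  have hbint : ∀ e : ℝ, IntervalIntegrable (fun t => p * (|f t| + e) ^ (p - 1) * |f' t|)
      volume c d := by
    intro e
    exact ((hbc e).mono (by rw [Set.uIcc_of_le hcd])).intervalIntegrable
  -- ε-level inequality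
  have key : ∀ e : ℝ, 0 < e →
      |(f d ^ 2 + e ^ 2) ^ (p / 2) - (f c ^ 2 + e ^ 2) ^ (p / 2)|
        ≤ ∫ t in c..d, p * (|f t| + e) ^ (p - 1) * |f' t| := by
    intro e he
    set G : ℝ → ℝ := fun t => p * (f t ^ 2 + e ^ 2) ^ (p / 2 - 1) * (f t * f' t) with hG
    have hGd : ∀ t ∈ Set.Icc c d,
        HasDerivAt (fun t => (f t ^ 2 + e ^ 2) ^ (p / 2)) (G t) t := by
      intro t ht
      have h1 : HasDerivAt (fun t => f t ^ 2 + e ^ 2) (2 * f t * f' t) t := by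
        simpa [mul_comm, mul_assoc] using (((hderiv t ht).pow 2).add_const (e ^ 2))
      have h2 := h1.rpow_const (p := p / 2) (Or.inl (by positivity))
      convert h2 using 1
      simp only [hG]
      ring
    have hGc : ContinuousOn G (Set.Icc c d) := by
      have hbase : ContinuousOn (fun t => f t ^ 2 + e ^ 2) (Set.Icc c d) :=
        (hfc.pow 2).add continuousOn_const
      have hpow : ContinuousOn (fun t => (f t ^ 2 + e ^ 2) ^ (p / 2 - 1)) (Set.Icc c d) :=
        fun t ht => (Real.continuousAt_rpow_const _ _
          (Or.inl (by positivity))).comp_continuousWithinAt (hbase t ht)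
      exact (continuousOn_const.mul hpow).mul (hfc.mul hf'c)
    have hGint : IntervalIntegrable G volume c d :=
      (hGc.mono (by rw [Set.uIcc_of_le hcd])).intervalIntegrable
    have hftc := intervalIntegral.integral_eq_sub_of_hasDerivAt
      (f := fun t => (f t ^ 2 + e ^ 2) ^ (p / 2)) (f' := G)
      (by rw [Set.uIcc_of_le hcd]; exact hGd) hGint
    rw [← hftc]
    calc |∫ t in c..d, G t| ≤ ∫ t in c..d, |G t| :=
        intervalIntegral.abs_integral_le_integral_abs hcd
      _ ≤ ∫ t in c..d, p * (|f t| + e) ^ (p - 1) * |f' t| := by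
        apply intervalIntegral.integral_mono_on hcd
          ((hGc.abs.mono (by rw [Set.uIcc_of_le hcd])).intervalIntegrable) (hbint e)
        intro t ht
        have hA : (0:ℝ) ≤ (f t ^ 2 + e ^ 2) ^ (p / 2 - 1) := Real.rpow_nonneg (by positivity) _
        have habs : |G t| = p * ((f t ^ 2 + e ^ 2) ^ (p / 2 - 1) * |f t|) * |f' t| := by
          simp only [hG, abs_mul, abs_of_nonneg hp0.le, abs_of_nonneg hA]
          ring
        rw [habs]
        have hb := eps_bound hp (abs_nonneg (f t)) he
        rw [sq_abs] at hb
        exact mul_le_mul_of_nonneg_right (mul_le_mul_of_nonneg_left hb hp0.le) (abs_nonneg _)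
  -- limits as e → 0+
  have hL : Tendsto (fun e : ℝ => |(f d ^ 2 + e ^ 2) ^ (p / 2) - (f c ^ 2 + e ^ 2) ^ (p / 2)|)
      (𝓝[>] 0) (𝓝 |(|f d| ^ p) - |f c| ^ p|) := by
    have hc : Continuous fun e : ℝ =>
        |(f d ^ 2 + e ^ 2) ^ (p / 2) - (f c ^ 2 + e ^ 2) ^ (p / 2)| := by
      apply Continuous.abs
      apply Continuous.sub <;>
        exact (contRpow (by linarith)).comp (continuous_const.add (continuous_pow 2))
    have h0 : Tendsto (fun e : ℝ => |(f d ^ 2 + e ^ 2) ^ (p / 2) - (f c ^ 2 + e ^ 2) ^ (p / 2)|)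
        (𝓝[>] (0:ℝ)) (𝓝 |(f d ^ 2 + (0:ℝ) ^ 2) ^ (p / 2) - (f c ^ 2 + (0:ℝ) ^ 2) ^ (p / 2)|) :=
      (hc.tendsto 0).mono_left nhdsWithin_le_nhds
    simpa only [sq_zero_rpow] using h0
  have hR : Tendsto (fun e : ℝ => ∫ t in c..d, p * (|f t| + e) ^ (p - 1) * |f' t|)
      (𝓝[>] 0) (𝓝 (∫ t in c..d, p * |f t| ^ (p - 1) * |f' t|)) := by
    have h01 : Set.Ioo (0:ℝ) 1 ∈ 𝓝[>] (0:ℝ) := Ioo_mem_nhdsGT zero_lt_one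
    apply intervalIntegral.tendsto_integral_filter_of_dominated_convergence
      (bound := fun t => p * (|f t| + 1) ^ (p - 1) * |f' t|)
    · filter_upwards with e
      apply ContinuousOn.aestronglyMeasurable _ measurableSet_uIoc
      exact (hbc e).mono (by rw [Set.uIoc_of_le hcd]; exact Set.Ioc_subset_Icc_self)
    · filter_upwards [h01] with e he
      refine ae_of_all _ fun t ht => ?_
      have he0 : (0:ℝ) ≤ |f t| + e := by linarith [abs_nonneg (f t), he.1]
      have h1 : (|f t| + e) ^ (p - 1) ≤ (|f t| + 1) ^ (p - 1) :=
        Real.rpow_le_rpow he0 (by linarith [he.2]) hp1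
      have h2 : (0:ℝ) ≤ p * (|f t| + e) ^ (p - 1) * |f' t| :=
        mul_nonneg (mul_nonneg hp0.le (Real.rpow_nonneg he0 _)) (abs_nonneg _)
      rw [Real.norm_eq_abs, abs_of_nonneg h2]
      exact mul_le_mul_of_nonneg_right (mul_le_mul_of_nonneg_left h1 hp0.le) (abs_nonneg _)
    · exact hbint 1
    · refine ae_of_all _ fun t ht => ?_
      have hc : Continuous fun e : ℝ => p * (|f t| + e) ^ (p - 1) * |f' t| :=
        (continuous_const.mul ((contRpow hp1).comp
          (continuous_const.add continuous_id))).mul continuous_const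
      have h0 : Tendsto (fun e : ℝ => p * (|f t| + e) ^ (p - 1) * |f' t|) (𝓝[>] (0:ℝ))
          (𝓝 (p * (|f t| + 0) ^ (p - 1) * |f' t|)) :=
        (hc.tendsto 0).mono_left nhdsWithin_le_nhds
      simpa using h0
  exact le_of_tendsto_of_tendsto hL hR
    (by filter_upwards [self_mem_nhdsWithin] with e he using key e he)

lemma line_trace {p : ℝ} (hp : 1 ≤ p) {f f' : ℝ → ℝ} {c d : ℝ} (hcd : c < d)
    (hderiv : ∀ t ∈ Set.Icc c d, HasDerivAt f (f' t) t)
    (hf'c : ContinuousOn f' (Set.Icc c d)) :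
    |f c| ^ p + |f d| ^ p ≤ (2 / (d - c)) * (∫ t in Set.Icc c d, |f t| ^ p)
      + ∫ t in Set.Icc c d, p * |f t| ^ (p - 1) * |f' t| := by
  have hfc : ContinuousOn f (Set.Icc c d) :=
    fun t ht => (hderiv t ht).continuousAt.continuousWithinAt
  have hp0 : (0:ℝ) < p := by linarith
  have hp1 : (0:ℝ) ≤ p - 1 := by linarith
  have hdc : (0:ℝ) < d - c := by linarith
  set g : ℝ → ℝ := fun t => p * |f t| ^ (p - 1) * |f' t| with hg
  have hgc : ContinuousOn g (Set.Icc c d) :=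
    (continuousOn_const.mul ((contRpow hp1).comp_continuousOn hfc.abs)).mul hf'c.abs
  have hFc : ContinuousOn (fun t => |f t| ^ p) (Set.Icc c d) :=
    (contRpow hp0.le).comp_continuousOn hfc.abs
  -- pointwise inequality in x
  have hpt : ∀ x ∈ Set.Icc c d,
      |f c| ^ p + |f d| ^ p ≤ 2 * |f x| ^ p + ∫ t in c..d, g t := by
    intro x hx
    have h1 := ftc_abs_rpow hp hx.1 (fun t ht => hderiv t ⟨ht.1, ht.2.trans hx.2⟩)
      (hf'c.mono (Set.Icc_subset_Icc le_rfl hx.2))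
    have h2 := ftc_abs_rpow hp hx.2 (fun t ht => hderiv t ⟨hx.1.trans ht.1, ht.2⟩)
      (hf'c.mono (Set.Icc_subset_Icc hx.1 le_rfl))
    have hadd : (∫ t in c..x, g t) + ∫ t in x..d, g t = ∫ t in c..d, g t := by
      apply intervalIntegral.integral_add_adjacent_intervals <;>
        apply ContinuousOn.intervalIntegrable <;> apply hgc.mono
      · rw [Set.uIcc_of_le hx.1]; exact Set.Icc_subset_Icc le_rfl hx.2
      · rw [Set.uIcc_of_le hx.2]; exact Set.Icc_subset_Icc hx.1 le_rfl
    have e1 : |f c| ^ p - |f x| ^ p ≤ ∫ t in c..x, g t := by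
      have := abs_le.1 h1
      linarith [this.1]
    have e2 : |f d| ^ p - |f x| ^ p ≤ ∫ t in x..d, g t := (abs_le.1 h2).2.trans' (by linarith [le_abs_self ((|f d| ^ p) - |f x| ^ p)])
    linarith
  -- integrate over x ∈ Icc c d
  have hIg : IntegrableOn g (Set.Icc c d) volume := hgc.integrableOn_compact isCompact_Icc
  have hIF : IntegrableOn (fun t => |f t| ^ p) (Set.Icc c d) volume :=
    hFc.integrableOn_compact isCompact_Icc
  have hint : ∫ x in Set.Icc c d, (|f c| ^ p + |f d| ^ p)
      ≤ ∫ x in Set.Icc c d, (2 * |f x| ^ p + ∫ t in c..d, g t) := by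
    apply setIntegral_mono_on (integrableOn_const (by simp [Real.volume_Icc]))
      ((hIF.const_mul 2).add (integrableOn_const (by simp [Real.volume_Icc])))
      measurableSet_Icc hpt
  rw [setIntegral_const] at hint
  rw [integral_add (hIF.const_mul 2) (integrableOn_const (by simp [Real.volume_Icc])),
    integral_const_mul, setIntegral_const] at hint
  simp only [Real.volume_Icc, Real.volume_real_Icc_of_le hcd.le, ENNReal.toReal_ofReal hdc.le, smul_eq_mul] at hint
  have hgeq : ∫ t in c..d, g t = ∫ t in Set.Icc c d, g t := by
    rw [intervalIntegral.integral_of_le hcd.le, integral_Icc_eq_integral_Ioc]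
  rw [hgeq] at hint
  -- divide by d - c
  rw [div_mul_eq_mul_div, ← sub_nonneg]
  have : (2 * ∫ t in Set.Icc c d, |f t| ^ p) / (d - c) + (∫ t in Set.Icc c d, g t)
      - (|f c| ^ p + |f d| ^ p)
      = ((2 * ∫ t in Set.Icc c d, |f t| ^ p) + (d - c) * (∫ t in Set.Icc c d, g t)
        - (d - c) * (|f c| ^ p + |f d| ^ p)) / (d - c) := by
    field_simp
  rw [this]
  apply div_nonneg _ hdc.le
  linarith

lemma restrict_Icc_prod (a₁ b₁ a₂ b₂ : ℝ) :
    (volume : Measure (ℝ × ℝ)).restrict (Set.Icc a₁ b₁ ×ˢ Set.Icc a₂ b₂)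
      = (volume.restrict (Set.Icc a₁ b₁)).prod (volume.restrict (Set.Icc a₂ b₂)) := by
  rw [Measure.volume_eq_prod, Measure.prod_restrict]

lemma fubini_Icc {a₁ b₁ a₂ b₂ : ℝ} {f : ℝ × ℝ → ℝ}
    (hf : IntegrableOn f (Set.Icc a₁ b₁ ×ˢ Set.Icc a₂ b₂)) :
    ∫ z in Set.Icc a₁ b₁ ×ˢ Set.Icc a₂ b₂, f z
      = ∫ y in Set.Icc a₂ b₂, ∫ x in Set.Icc a₁ b₁, f (x, y) := by
  have hf' : Integrable f
      ((volume.restrict (Set.Icc a₁ b₁)).prod (volume.restrict (Set.Icc a₂ b₂))) := by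
    rw [← restrict_Icc_prod]; exact hf
  calc ∫ z in Set.Icc a₁ b₁ ×ˢ Set.Icc a₂ b₂, f z
      = ∫ z, f z ∂((volume.restrict (Set.Icc a₁ b₁)).prod (volume.restrict (Set.Icc a₂ b₂))) := by
        rw [← restrict_Icc_prod]
    _ = ∫ x in Set.Icc a₁ b₁, ∫ y in Set.Icc a₂ b₂, f (x, y) := integral_prod f hf'
    _ = ∫ y in Set.Icc a₂ b₂, ∫ x in Set.Icc a₁ b₁, f (x, y) :=
        integral_integral_swap (f := fun x y => f (x, y)) hf'

lemma integrable_inner_of_prod {a₁ b₁ a₂ b₂ : ℝ} {f : ℝ × ℝ → ℝ}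
    (hf : IntegrableOn f (Set.Icc a₁ b₁ ×ˢ Set.Icc a₂ b₂)) :
    IntegrableOn (fun y => ∫ x in Set.Icc a₁ b₁, f (x, y)) (Set.Icc a₂ b₂) := by
  have hf' : Integrable f
      ((volume.restrict (Set.Icc a₁ b₁)).prod (volume.restrict (Set.Icc a₂ b₂))) := by
    rw [← restrict_Icc_prod]; exact hf
  exact hf'.integral_prod_right

lemma holder_step {p : ℝ} (hp : 1 ≤ p) {T : Set (ℝ × ℝ)} (hTc : IsCompact T)
    (hTm : MeasurableSet T) {u w : ℝ × ℝ → ℝ}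
    (hu : ContinuousOn u T) (hw : ContinuousOn w T) :
    ∫ z in T, p * |u z| ^ (p - 1) * |w z|
      ≤ p * (∫ z in T, |u z| ^ p) ^ ((p - 1) / p) * (∫ z in T, |w z| ^ p) ^ (1 / p) := by
  have hp0 : (0:ℝ) < p := by linarith
  rcases eq_or_lt_of_le hp with hp1 | hp1
  · subst hp1
    simp [Real.rpow_zero, Real.rpow_one]
  · haveI hfin : IsFiniteMeasure (volume.restrict T) :=
      ⟨by rw [Measure.restrict_apply_univ]; exact hTc.measure_lt_top⟩
    have hp1' : p - 1 ≠ 0 := by linarith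
    have hmem : ∀ (g : ℝ × ℝ → ℝ), ContinuousOn g T → ∀ q : ℝ≥0∞,
        MemLp g q (volume.restrict T) := by
      intro g hg q
      obtain ⟨C, hC⟩ := hTc.exists_bound_of_continuousOn hg
      exact MemLp.of_bound (hg.aestronglyMeasurable hTm) C
        ((ae_restrict_iff' hTm).2 (ae_of_all _ hC))
    have hpq : (Real.conjExponent p).HolderConjugate p :=
      (Real.HolderConjugate.conjExponent hp1).symm
    have h := integral_mul_le_Lp_mul_Lq_of_nonneg hpq
      (f := fun z => |u z| ^ (p - 1)) (g := fun z => |w z|)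
      (ae_of_all _ fun z => Real.rpow_nonneg (abs_nonneg _) _)
      (ae_of_all _ fun z => abs_nonneg _)
      (hmem _ ((contRpow (by linarith)).comp_continuousOn hu.abs) _)
      (hmem _ hw.abs _)
    have hrw1 : ∀ z : ℝ × ℝ, (|u z| ^ (p - 1)) ^ (Real.conjExponent p) = |u z| ^ p := by
      intro z
      rw [Real.conjExponent, ← Real.rpow_mul (abs_nonneg _)]
      congr 1
      field_simp
    have hrw2 : 1 / Real.conjExponent p = (p - 1) / p := by
      rw [Real.conjExponent, one_div_div]
    simp only [hrw1, hrw2] at h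
    calc ∫ z in T, p * |u z| ^ (p - 1) * |w z|
        = p * ∫ z in T, |u z| ^ (p - 1) * |w z| := by
          simp only [mul_assoc]
          rw [integral_const_mul]
      _ ≤ p * ((∫ z in T, |u z| ^ p) ^ ((p - 1) / p) * (∫ z in T, |w z| ^ p) ^ (1 / p)) :=
          mul_le_mul_of_nonneg_left h hp0.le
      _ = _ := by ring


set_option maxHeartbeats 2000000 in
/-- anisotropic multiplicative trace inequality on the axis-aligned
rectangle `T = [a₁,b₁] × [a₂,b₂]` for the two edges parallel to the `y`-axis. -/
theorem anisotropic_multiplicative_trace (p : ℝ) (hp : 1 ≤ p)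
    (a₁ b₁ a₂ b₂ : ℝ) (hx : 0 < b₁ - a₁) (hy : a₂ ≤ b₂)
    (v : ℝ × ℝ → ℝ) (U : Set (ℝ × ℝ)) (hU : IsOpen U)
    (hT : Set.Icc (a₁, a₂) (b₁, b₂) ⊆ U) (hv : ContDiffOn ℝ 1 v U) :
    (∫ y in Set.Icc a₂ b₂, (|v (a₁, y)| ^ p + |v (b₁, y)| ^ p)) ≤
      p * (∫ z in Set.Icc (a₁, a₂) (b₁, b₂), |v z| ^ p) ^ ((p - 1) / p) *
          (∫ z in Set.Icc (a₁, a₂) (b₁, b₂), |pdx v z| ^ p) ^ (1 / p) +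
        (2 / (b₁ - a₁)) * ∫ z in Set.Icc (a₁, a₂) (b₁, b₂), |v z| ^ p := by
  have hp0 : (0:ℝ) < p := by linarith
  have hp1 : (0:ℝ) ≤ p - 1 := by linarith
  have ha₁b₁ : a₁ < b₁ := by linarith
  set s := Set.Icc a₁ b₁ with hs_def
  set t := Set.Icc a₂ b₂ with ht_def
  set T := Set.Icc (a₁, a₂) (b₁, b₂) with hT_def
  have hTst : T = s ×ˢ t := Set.Icc_prod_eq (a₁, a₂) (b₁, b₂)
  have hTc : IsCompact T := isCompact_Icc
  have hTm : MeasurableSet T := measurableSet_Icc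
  have hmemT : ∀ x ∈ s, ∀ y ∈ t, (x, y) ∈ T := by
    intro x hxx y hyy
    rw [hTst]
    exact Set.mem_prod.2 ⟨hxx, hyy⟩
  -- continuity and differentiability structure
  have hvC : ContinuousOn v U := hv.continuousOn
  have hdiff : ∀ q ∈ U, HasDerivAt (fun x => v (x, q.2)) (fderiv ℝ v q (1, 0)) q.1 := by
    intro q hq
    obtain ⟨qx, qy⟩ := q
    have h1 : HasFDerivAt v (fderiv ℝ v (qx, qy)) (qx, qy) :=
      ((hv.differentiableOn one_ne_zero).differentiableAt (hU.mem_nhds hq)).hasFDerivAt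
    have h2 : HasDerivAt (fun x : ℝ => (x, qy)) ((1:ℝ), (0:ℝ)) qx :=
      (hasDerivAt_id qx).prodMk (hasDerivAt_const qx qy)
    exact h1.comp_hasDerivAt qx h2
  have hpdx_eq : ∀ q ∈ U, pdx v q = fderiv ℝ v q (1, 0) :=
    fun q hq => (hdiff q hq).deriv
  have hpdx_d : ∀ q ∈ U, HasDerivAt (fun x => v (x, q.2)) (pdx v q) q.1 :=
    fun q hq => (hpdx_eq q hq).symm ▸ hdiff q hq
  have hdvC : ContinuousOn (pdx v) U := by
    have h1 : ContinuousOn (fun q => fderiv ℝ v q) U :=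
      hv.continuousOn_fderiv_of_isOpen hU le_rfl
    have h2 : ContinuousOn (fun q => fderiv ℝ v q ((1:ℝ), (0:ℝ))) U :=
      (ContinuousLinearMap.apply ℝ ℝ ((1:ℝ), (0:ℝ))).continuous.comp_continuousOn h1
    exact h2.congr hpdx_eq
  -- per-line trace inequality
  have hline : ∀ y ∈ t, |v (a₁, y)| ^ p + |v (b₁, y)| ^ p
      ≤ (2 / (b₁ - a₁)) * (∫ x in s, |v (x, y)| ^ p)
        + ∫ x in s, p * |v (x, y)| ^ (p - 1) * |pdx v (x, y)| := by
    intro y hyy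
    have hUy : ∀ x ∈ s, (x, y) ∈ U := fun x hxx => hT (hmemT x hxx y hyy)
    have hcy : ContinuousOn (fun x => pdx v (x, y)) s :=
      hdvC.comp (Continuous.continuousOn (continuous_id.prodMk continuous_const))
        (fun x hxx => hUy x hxx)
    exact line_trace (f := fun x => v (x, y)) (f' := fun x => pdx v (x, y)) hp ha₁b₁ (fun x hxx => hpdx_d (x, y) (hUy x hxx)) hcy
  -- global continuity / integrability
  have hvT : ContinuousOn v T := hvC.mono hT
  have hdvT : ContinuousOn (pdx v) T := hdvC.mono hT
  have hF1 : ContinuousOn (fun z => |v z| ^ p) T := (contRpow hp0.le).comp_continuousOn hvT.abs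
  have hF3 : ContinuousOn (fun z => p * |v z| ^ (p - 1) * |pdx v z|) T :=
    (continuousOn_const.mul ((contRpow hp1).comp_continuousOn hvT.abs)).mul hdvT.abs
  have hI1 : IntegrableOn (fun z => |v z| ^ p) T volume := hF1.integrableOn_compact hTc
  have hI3 : IntegrableOn (fun z => p * |v z| ^ (p - 1) * |pdx v z|) T volume :=
    hF3.integrableOn_compact hTc
  have hI1' : IntegrableOn (fun z => |v z| ^ p) (s ×ˢ t) volume := hTst ▸ hI1
  have hI3' : IntegrableOn (fun z => p * |v z| ^ (p - 1) * |pdx v z|) (s ×ˢ t) volume :=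
    hTst ▸ hI3
  -- Fubini identities
  have hfub1 : ∫ z in T, |v z| ^ p = ∫ y in t, ∫ x in s, |v (x, y)| ^ p := by
    rw [hTst]; exact fubini_Icc hI1'
  have hfub3 : ∫ z in T, p * |v z| ^ (p - 1) * |pdx v z|
      = ∫ y in t, ∫ x in s, p * |v (x, y)| ^ (p - 1) * |pdx v (x, y)| := by
    rw [hTst]; exact fubini_Icc hI3'
  have hIy1 : IntegrableOn (fun y => ∫ x in s, |v (x, y)| ^ p) t volume :=
    integrable_inner_of_prod hI1'
  have hIy3 : IntegrableOn (fun y => ∫ x in s, p * |v (x, y)| ^ (p - 1) * |pdx v (x, y)|)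
      t volume := integrable_inner_of_prod hI3'
  -- integrability of the trace integrand
  have hAc : ContinuousOn (fun y => |v (a₁, y)| ^ p + |v (b₁, y)| ^ p) t := by
    have h1 : ∀ e : ℝ, e ∈ s → ContinuousOn (fun y => |v (e, y)| ^ p) t := by
      intro e he
      exact (contRpow hp0.le).comp_continuousOn
        ((hvT.comp (Continuous.continuousOn (continuous_const.prodMk continuous_id))
          (fun y hyy => hmemT e he y hyy)).abs)
    exact (h1 a₁ (Set.left_mem_Icc.2 ha₁b₁.le)).add (h1 b₁ (Set.right_mem_Icc.2 ha₁b₁.le))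
  have hAi : IntegrableOn (fun y => |v (a₁, y)| ^ p + |v (b₁, y)| ^ p) t volume :=
    hAc.integrableOn_compact isCompact_Icc
  -- main chain
  have step1 : (∫ y in t, (|v (a₁, y)| ^ p + |v (b₁, y)| ^ p))
      ≤ ∫ y in t, ((2 / (b₁ - a₁)) * (∫ x in s, |v (x, y)| ^ p)
          + ∫ x in s, p * |v (x, y)| ^ (p - 1) * |pdx v (x, y)|) :=
    setIntegral_mono_on hAi ((hIy1.const_mul _).add hIy3) measurableSet_Icc hline
  have step2 : ∫ y in t, ((2 / (b₁ - a₁)) * (∫ x in s, |v (x, y)| ^ p)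
        + ∫ x in s, p * |v (x, y)| ^ (p - 1) * |pdx v (x, y)|)
      = (2 / (b₁ - a₁)) * (∫ z in T, |v z| ^ p)
        + ∫ z in T, p * |v z| ^ (p - 1) * |pdx v z| := by
    rw [integral_add (hIy1.const_mul _) hIy3, integral_const_mul, hfub1, hfub3]
  have step3 := holder_step hp hTc hTm hvT hdvT
  calc (∫ y in t, (|v (a₁, y)| ^ p + |v (b₁, y)| ^ p))
      ≤ (2 / (b₁ - a₁)) * (∫ z in T, |v z| ^ p)
        + ∫ z in T, p * |v z| ^ (p - 1) * |pdx v z| := by rw [← step2]; exact step1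
    _ ≤ (2 / (b₁ - a₁)) * (∫ z in T, |v z| ^ p)
        + p * (∫ z in T, |v z| ^ p) ^ ((p - 1) / p) * (∫ z in T, |pdx v z| ^ p) ^ (1 / p) := by
          linarith
    _ = _ := by ring
end
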